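/- Let π : M → N be a surjective linear map between finite-dimensional real vector spaces, C = M × (ker π)° ⊆ M × M*, and J : C → N × N* the linear map J(m,η) = (π(m), j_π(η)), where j_π(η) is the unique covector with j_π(η) ∘ π = η. Let Λ ⊆ M × M* be a Lagrangian subspace with respect to the canonical symplectic form ω_M, and assume the transversality condition Λ + C = M × M*. Then the restriction of J to Λ ∩ C is injective, and J(Λ ∩ C) is a Lagrangian subspace of (N × N*, ω_N). -/

import Mathlib

/-- The canonical symplectic form `ω((x₁,α₁),(x₂,α₂)) = α₁(x₂) − α₂(x₁)` on `X ⊕ X*`. -/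
noncomputable def canonicalSymplecticForm (X : Type*) [AddCommGroup X] [Module ℝ X] :
    LinearMap.BilinForm ℝ (X × Module.Dual ℝ X) :=
  LinearMap.mk₂ ℝ (fun x y => x.2 y.1 - y.2 x.1)
    (by intro m₁ m₂ n; simp; ring)
    (by intro c m n; simp; ring)
    (by intro m n₁ n₂; simp; ring)
    (by intro c m n; simp; ring)

/-- The orthogonal complement of a subspace of `X ⊕ X*` with respect to the canonical
symplectic form; a subspace is Lagrangian when it coincides with its orthogonal. -/
noncomputable def sympOrthogonal (X : Type*) [AddCommGroup X] [Module ℝ X]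
    (S : Submodule ℝ (X × Module.Dual ℝ X)) : Submodule ℝ (X × Module.Dual ℝ X) :=
  LinearMap.BilinForm.orthogonal (canonicalSymplecticForm X) S

/-- The forward image `F_φ(D_U) = {(φ(u), β) | u ∈ U, β ∈ V*, (u, β ∘ φ) ∈ D_U}`
of a subspace `D_U ⊆ U ⊕ U*` under a linear map `φ : U → V`. -/
noncomputable def forwardImage {U V : Type*} [AddCommGroup U] [Module ℝ U]
    [AddCommGroup V] [Module ℝ V] (φ : U →ₗ[ℝ] V)
    (D : Submodule ℝ (U × Module.Dual ℝ U)) : Submodule ℝ (V × Module.Dual ℝ V) where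
  carrier := {p | ∃ u : U, p.1 = φ u ∧ (u, p.2.comp φ) ∈ D}
  add_mem' := by
    rintro ⟨v₁, β₁⟩ ⟨v₂, β₂⟩ ⟨u₁, h₁, hD₁⟩ ⟨u₂, h₂, hD₂⟩
    refine ⟨u₁ + u₂, by simp at h₁ h₂; simp [h₁, h₂], ?_⟩
    simpa [LinearMap.add_comp] using D.add_mem hD₁ hD₂
  zero_mem' := ⟨0, by simp, by simp; exact D.zero_mem⟩
  smul_mem' := by
    rintro c ⟨v, β⟩ ⟨u, h, hD⟩
    refine ⟨c • u, by simp at h; simp [h], ?_⟩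
    simpa [LinearMap.smul_comp] using D.smul_mem c hD


section Aux

variable {X : Type*} [AddCommGroup X] [Module ℝ X]

@[simp] lemma canonicalSymplecticForm_apply (x y : X × Module.Dual ℝ X) :
    canonicalSymplecticForm X x y = x.2 y.1 - y.2 x.1 := rfl

lemma canon_isRefl : (canonicalSymplecticForm X).IsRefl := by
  intro x y h
  simp only [canonicalSymplecticForm_apply] at *
  linarith

lemma canon_nondegenerate : (canonicalSymplecticForm X).Nondegenerate := by
  refine (LinearMap.IsRefl.nondegenerate_iff_separatingLeft (B := canonicalSymplecticForm X) canon_isRefl).mpr ?_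
  intro x hx
  have h1 : x.2 = 0 := by
    ext a
    simpa using hx (a, 0)
  have h2 : x.1 = 0 := by
    rw [← Module.forall_dual_apply_eq_zero_iff ℝ x.1]
    intro φ
    have := hx (0, φ)
    simp at this
    linarith
  exact Prod.ext h2 h1

lemma orth_sup (B : LinearMap.BilinForm ℝ X) (A A' : Submodule ℝ X) :
    B.orthogonal (A ⊔ A') = B.orthogonal A ⊓ B.orthogonal A' := by
  ext x
  simp only [Submodule.mem_inf, LinearMap.BilinForm.mem_orthogonal_iff]
  constructor
  · intro h
    exact ⟨fun n hn => h n (Submodule.mem_sup_left hn),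
           fun n hn => h n (Submodule.mem_sup_right hn)⟩
  · rintro ⟨h1, h2⟩ n hn
    rcases Submodule.mem_sup.mp hn with ⟨y, hy, z, hz, rfl⟩
    have := h1 y hy
    have := h2 z hz
    simp [map_add, *]

end Aux

/-- (Linear model of a Morse family generating a Lagrangian immersion.)
Let `π : M → N` be surjective linear, `C = M × (ker π)° ⊆ M ⊕ M*`, and
`J : C → N ⊕ N*`, `J(m,η) = (π m, j_π η)`, where `j_π η` is the unique covector `β`
with `β ∘ π = η`.  If `Λ ⊆ M ⊕ M*` is Lagrangian for `ω_M` and `Λ + C = M ⊕ M*`,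
then `J` is injective on `Λ ∩ C` (stated below via the characterization
`p = J x ↔ p.1 = π x.1 ∧ p.2 ∘ π = x.2` for `x ∈ C`), and the image
`J(Λ ∩ C) = {(π m, β) | (m, β∘π) ∈ Λ ∩ C} = forwardImage π (Λ ⊓ C)` is a Lagrangian
subspace of `(N ⊕ N*, ω_N)`. -/
theorem lagrangian_reduction_by_morse_family
    {M N : Type*} [AddCommGroup M] [Module ℝ M] [FiniteDimensional ℝ M]
    [AddCommGroup N] [Module ℝ N] [FiniteDimensional ℝ N]
    (π : M →ₗ[ℝ] N) (hπ : Function.Surjective π)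
    (Λ : Submodule ℝ (M × Module.Dual ℝ M))
    (hΛ : Λ = sympOrthogonal M Λ)
    (htrans : Λ ⊔ (⊤ : Submodule ℝ M).prod (LinearMap.ker π).dualAnnihilator = ⊤) :
    (∀ x ∈ Λ ⊓ (⊤ : Submodule ℝ M).prod (LinearMap.ker π).dualAnnihilator,
      ∀ y ∈ Λ ⊓ (⊤ : Submodule ℝ M).prod (LinearMap.ker π).dualAnnihilator,
        ∀ p q : N × Module.Dual ℝ N,
          p.1 = π x.1 → p.2.comp π = x.2 →
          q.1 = π y.1 → q.2.comp π = y.2 → p = q → x = y) ∧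
    forwardImage π (Λ ⊓ (⊤ : Submodule ℝ M).prod (LinearMap.ker π).dualAnnihilator) =
      sympOrthogonal N
        (forwardImage π
          (Λ ⊓ (⊤ : Submodule ℝ M).prod (LinearMap.ker π).dualAnnihilator)) := by
  classical
  set C : Submodule ℝ (M × Module.Dual ℝ M) :=
    (⊤ : Submodule ℝ M).prod (LinearMap.ker π).dualAnnihilator with hC
  set K : Submodule ℝ (M × Module.Dual ℝ M) :=
    (LinearMap.ker π).prod (⊥ : Submodule ℝ (Module.Dual ℝ M)) with hK
  have hrefl : (canonicalSymplecticForm M).IsRefl := canon_isRefl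
  have hnd : (canonicalSymplecticForm M).Nondegenerate := canon_nondegenerate
  -- orthogonal of K is C
  have horthK : sympOrthogonal M K = C := by
    ext x
    simp only [sympOrthogonal, LinearMap.BilinForm.mem_orthogonal_iff,
      LinearMap.BilinForm.IsOrtho, canonicalSymplecticForm_apply]
    constructor
    · intro h
      refine Submodule.mem_prod.mpr ⟨trivial, ?_⟩
      rw [Submodule.mem_dualAnnihilator]
      intro d hd
      have := h (d, 0) (Submodule.mem_prod.mpr ⟨hd, Submodule.zero_mem _⟩)
      simp at this
      linarith
    · intro hx n hn
      rcases Submodule.mem_prod.mp hn with ⟨hn1, hn2⟩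
      rcases Submodule.mem_prod.mp hx with ⟨_, hx2⟩
      rw [Submodule.mem_bot] at hn2
      rw [Submodule.mem_dualAnnihilator] at hx2
      simp [hn2, hx2 n.1 hn1]
  -- orthogonal of Λ ⊓ C is Λ ⊔ K
  have hkey : sympOrthogonal M (Λ ⊓ C) = Λ ⊔ K := by
    have h1 : sympOrthogonal M (Λ ⊔ K) = Λ ⊓ C := by
      have e1 : (canonicalSymplecticForm M).orthogonal Λ = Λ := hΛ.symm
      have e2 : (canonicalSymplecticForm M).orthogonal K = C := horthK
      rw [sympOrthogonal, orth_sup, e1, e2]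
    calc sympOrthogonal M (Λ ⊓ C) = sympOrthogonal M (sympOrthogonal M (Λ ⊔ K)) := by rw [h1]
      _ = Λ ⊔ K := LinearMap.BilinForm.orthogonal_orthogonal hnd hrefl _
  constructor
  · -- injectivity
    rintro x hx y hy p q hp1 hp2 hq1 hq2 rfl
    have h2 : x.2 = y.2 := by rw [← hp2, ← hq2]
    have hd : x.1 - y.1 ∈ LinearMap.ker π := by
      rw [LinearMap.mem_ker, map_sub, ← hp1, ← hq1, sub_self]
    have hxy : x - y ∈ Λ := Λ.sub_mem hx.1 hy.1
    have hxy2 : (x - y).2 = 0 := by simp [h2]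
    -- x - y is symplectically orthogonal to everything
    have hall : ∀ z : M × Module.Dual ℝ M, canonicalSymplecticForm M (x - y) z = 0 := by
      intro z
      have hz : z ∈ Λ ⊔ C := htrans ▸ Submodule.mem_top
      rcases Submodule.mem_sup.mp hz with ⟨l, hl, c, hc, rfl⟩
      have hlz : canonicalSymplecticForm M (x - y) l = 0 := by
        exact (hΛ ▸ hl : l ∈ sympOrthogonal M Λ) (x - y) hxy
      have hcz : canonicalSymplecticForm M (x - y) c = 0 := by
        rcases Submodule.mem_prod.mp hc with ⟨_, hc2⟩
        rw [Submodule.mem_dualAnnihilator] at hc2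
        have h3 := hc2 _ hd
        rw [map_sub] at h3
        have h4 : x.2 c.1 = y.2 c.1 := by rw [h2]
        simp only [canonicalSymplecticForm_apply, Prod.snd_sub, Prod.fst_sub,
          LinearMap.sub_apply, map_sub]
        linarith
      rw [map_add, hlz, hcz, add_zero]
    have hd0 : x.1 - y.1 = 0 := by
      rw [← Module.forall_dual_apply_eq_zero_iff ℝ (x.1 - y.1)]
      intro φ
      have := hall (0, φ)
      simp only [canonicalSymplecticForm_apply, Prod.snd_sub, Prod.fst_sub,
        LinearMap.sub_apply, map_sub] at this
      simp only [map_sub]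
      have h5 : x.2 0 = y.2 0 := by rw [h2]
      simp only [map_zero] at this h5
      linarith
    have : x.1 = y.1 := by rwa [sub_eq_zero] at hd0
    exact Prod.ext this h2
  · -- the image is Lagrangian
    apply le_antisymm
    · -- isotropic
      rintro p ⟨u, hu1, hu2⟩
      rw [sympOrthogonal, LinearMap.BilinForm.mem_orthogonal_iff]
      rintro q ⟨v, hv1, hv2⟩
      have hΛorth := hΛ ▸ hu2.1
      have := hΛorth (v, q.2.comp π) hv2.1
      simp only [LinearMap.BilinForm.IsOrtho, canonicalSymplecticForm_apply] at this ⊢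
      simp only [LinearMap.comp_apply] at this
      rw [hu1, hv1]
      linarith
    · -- coisotropic
      rintro ⟨n, γ⟩ hp
      rcases hπ n with ⟨u, hu⟩
      have hγ : γ.comp π ∈ (LinearMap.ker π).dualAnnihilator := by
        rw [Submodule.mem_dualAnnihilator]
        intro d hd
        simp [LinearMap.mem_ker.mp hd]
      have hx : (u, γ.comp π) ∈ sympOrthogonal M (Λ ⊓ C) := by
        rw [sympOrthogonal, LinearMap.BilinForm.mem_orthogonal_iff]
        rintro ⟨v, δ⟩ hy
        obtain ⟨hyΛ, hyC⟩ := hy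
        rcases Submodule.mem_prod.mp hyC with ⟨_, hδ⟩
        obtain ⟨β, hβ⟩ : ∃ β : Module.Dual ℝ N, β.comp π = δ := by
          have : δ ∈ LinearMap.range π.dualMap := by
            rw [LinearMap.range_dualMap_eq_dualAnnihilator_ker_of_surjective π hπ]
            exact hδ
          rcases this with ⟨β, hβ⟩
          exact ⟨β, hβ⟩
        have hq : (π v, β) ∈ forwardImage π (Λ ⊓ C) := ⟨v, rfl, by rw [hβ]; exact ⟨hyΛ, hyC⟩⟩
        have := hp (π v, β) hq
        simp only [LinearMap.BilinForm.IsOrtho, canonicalSymplecticForm_apply] at this ⊢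
        simp only [LinearMap.comp_apply] at this ⊢
        rw [← hβ] at *
        simp only [LinearMap.comp_apply] at *
        rw [hu] at *
        linarith
      rw [hkey] at hx
      rcases Submodule.mem_sup.mp hx with ⟨l, hl, k, hk, hlk⟩
      rcases Submodule.mem_prod.mp hk with ⟨hk1, hk2⟩
      rw [Submodule.mem_bot] at hk2
      refine ⟨u - k.1, ?_, ?_⟩
      · simp only
        rw [map_sub, hu, LinearMap.mem_ker.mp hk1, sub_zero]
      · have hl' : l = (u - k.1, γ.comp π) := by
          have h1 : l.1 = u - k.1 := by
            have := congrArg Prod.fst hlk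
            simp at this
            exact eq_sub_of_add_eq this
          have h2 : l.2 = γ.comp π := by
            have := congrArg Prod.snd hlk
            simp [hk2] at this
            exact this
          exact Prod.ext h1 h2
        refine ⟨?_, Submodule.mem_prod.mpr ⟨trivial, hγ⟩⟩
        · show ((u - k.1 : M), γ.comp π) ∈ Λ
          rw [← hl']
          exact hl
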